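/- For any 0 < a < b, there exists a constant m > 0 depending on a, b and ν such that for all s, t in [a,b]^ν, λ([0,s] △ [0,t]) ≥ m·‖s−t‖. -/

import Mathlib

open MeasureTheory

noncomputable def box {ν : ℕ} (t : Fin ν → ℝ) : Set (Fin ν → ℝ) :=
  Set.univ.pi fun i => Set.Icc 0 (t i)

noncomputable def dlam {ν : ℕ} (s t : Fin ν → ℝ) : ℝ :=
  (volume (symmDiff (box s) (box t))).toReal

/-- Euclidean distance on `ℝ^ν`. -/
noncomputable def eudist {ν : ℕ} (s t : Fin ν → ℝ) : ℝ :=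
  Real.sqrt (∑ i, (s i - t i) ^ 2)

lemma dlam_comm {ν : ℕ} (s t : Fin ν → ℝ) : dlam s t = dlam t s := by
  rw [dlam, dlam, symmDiff_comm]

lemma dlam_nonneg {ν : ℕ} (s t : Fin ν → ℝ) : 0 ≤ dlam s t :=
  ENNReal.toReal_nonneg

lemma key {ν : ℕ} (a b : ℝ) (ha : 0 < a) (s t : Fin ν → ℝ)
    (hs : ∀ i, s i ∈ Set.Icc a b) (ht : ∀ i, t i ∈ Set.Icc a b)
    (i : Fin ν) (hlt : t i < s i) :
    a ^ (ν - 1) * (s i - t i) ≤ dlam s t := by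
  set C : Set (Fin ν → ℝ) :=
    Set.univ.pi fun j => if j = i then Set.Ioc (t i) (s i) else Set.Icc 0 a with hC
  have hsub : C ⊆ symmDiff (box s) (box t) := by
    intro x hx
    have hx' : ∀ j, x j ∈ if j = i then Set.Ioc (t i) (s i) else Set.Icc 0 a := by
      intro j; exact hx j (Set.mem_univ j)
    have hxi : x i ∈ Set.Ioc (t i) (s i) := by simpa using hx' i
    refine Or.inl ⟨?_, ?_⟩
    · intro j _
      by_cases hj : j = i
      · rw [hj]
        exact ⟨le_of_lt (lt_of_lt_of_le ha (le_trans (ht i).1 hxi.1.le)), hxi.2⟩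
      · have := hx' j; rw [if_neg hj] at this
        exact ⟨this.1, this.2.trans (hs j).1⟩
    · intro hmem
      have := hmem i (Set.mem_univ i)
      exact absurd this.2 (not_le.mpr hxi.1)
  have hCvol : volume C = ENNReal.ofReal (s i - t i) * ENNReal.ofReal a ^ (ν - 1) := by
    rw [hC, volume_pi_pi]
    rw [← Finset.mul_prod_erase Finset.univ _ (Finset.mem_univ i)]
    rw [if_pos rfl, Real.volume_Ioc]
    congr 1
    rw [Finset.prod_congr rfl (fun j hj => by
      rw [if_neg (Finset.ne_of_mem_erase hj), Real.volume_Icc, sub_zero])]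
    rw [Finset.prod_const, Finset.card_erase_of_mem (Finset.mem_univ i),
      Finset.card_univ, Fintype.card_fin]
  have hfin : volume (symmDiff (box s) (box t)) ≠ ⊤ := by
    have hsub2 : symmDiff (box s) (box t) ⊆ Set.univ.pi fun _ : Fin ν => Set.Icc 0 b := by
      intro x hx
      rcases hx with ⟨hx, -⟩ | ⟨hx, -⟩ <;>
        exact fun j hj => ⟨(hx j hj).1, (hx j hj).2.trans (by
          first | exact (hs j).2 | exact (ht j).2)⟩
    refine ne_of_lt (lt_of_le_of_lt (measure_mono hsub2) ?_)
    rw [volume_pi_pi]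
    simp only [Real.volume_Icc, sub_zero, Finset.prod_const]
    exact ENNReal.pow_lt_top ENNReal.ofReal_lt_top
  have hle : volume C ≤ volume (symmDiff (box s) (box t)) := measure_mono hsub
  have := ENNReal.toReal_mono hfin hle
  rw [hCvol] at this
  rw [ENNReal.toReal_mul, ENNReal.toReal_pow, ENNReal.toReal_ofReal (by linarith),
    ENNReal.toReal_ofReal ha.le] at this
  rw [dlam]
  linarith [this]

/-- For `0 < a < b`, there is `m > 0` with `m‖s−t‖ ≤ λ([0,s] △ [0,t])` on `[a,b]^ν`. -/
theorem stmt1 (ν : ℕ) (a b : ℝ) (ha : 0 < a) (hab : a < b) :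
    ∃ m > 0, ∀ s t : Fin ν → ℝ, (∀ i, s i ∈ Set.Icc a b) → (∀ i, t i ∈ Set.Icc a b) →
      m * eudist s t ≤ dlam s t := by
  rcases Nat.eq_zero_or_pos ν with hν | hν
  · subst hν
    refine ⟨1, one_pos, fun s t _ _ => ?_⟩
    have : eudist s t = 0 := by simp [eudist]
    rw [this, mul_zero]
    exact dlam_nonneg s t
  · haveI : Nonempty (Fin ν) := ⟨⟨0, hν⟩⟩
    have hsν : (0:ℝ) < Real.sqrt ν := Real.sqrt_pos.mpr (by exact_mod_cast hν)
    refine ⟨a ^ (ν - 1) / Real.sqrt ν,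
      div_pos (pow_pos ha _) hsν, fun s t hs ht => ?_⟩
    obtain ⟨i, -, hi⟩ := Finset.exists_max_image Finset.univ (fun j => |s j - t j|)
      ⟨Classical.arbitrary (Fin ν), Finset.mem_univ _⟩
    set M := |s i - t i| with hM
    have hMnn : 0 ≤ M := abs_nonneg _
    have heu : eudist s t ≤ Real.sqrt ν * M := by
      rw [eudist]
      have hsum : (∑ j, (s j - t j) ^ 2) ≤ ν * M ^ 2 := by
        calc (∑ j, (s j - t j) ^ 2) ≤ ∑ _j : Fin ν, M ^ 2 := by
              refine Finset.sum_le_sum fun j _ => ?_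
              rw [← sq_abs]
              exact pow_le_pow_left₀ (abs_nonneg _) (hi j (Finset.mem_univ j)) 2
          _ = ν * M ^ 2 := by
              rw [Finset.sum_const, Finset.card_univ, Fintype.card_fin, nsmul_eq_mul]
      calc Real.sqrt (∑ j, (s j - t j) ^ 2) ≤ Real.sqrt (ν * M ^ 2) :=
            Real.sqrt_le_sqrt hsum
        _ = Real.sqrt ν * M := by
            rw [Real.sqrt_mul (by positivity), Real.sqrt_sq hMnn]
    have hmm : a ^ (ν - 1) / Real.sqrt ν * (Real.sqrt ν * M) = a ^ (ν - 1) * M := by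
      field_simp
    have hkey : a ^ (ν - 1) * M ≤ dlam s t := by
      rcases lt_trichotomy (t i) (s i) with h | h | h
      · have := key a b ha s t hs ht i h
        rwa [hM, abs_of_pos (by linarith)]
      · rw [hM, h, sub_self, abs_zero, mul_zero]; exact dlam_nonneg s t
      · have := key a b ha t s ht hs i h
        rw [dlam_comm]
        rwa [hM, abs_of_neg (by linarith), neg_sub]
    calc a ^ (ν - 1) / Real.sqrt ν * eudist s t
        ≤ a ^ (ν - 1) / Real.sqrt ν * (Real.sqrt ν * M) := by
          exact mul_le_mul_of_nonneg_left heu (by positivity)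
      _ = a ^ (ν - 1) * M := hmm
      _ ≤ dlam s t := hkey
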